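/- Fix real numbers ν₁, ν₂ > 0 such that ν₁⁴ is rational, ν₂⁴ is rational and ν₂²/ν₁² is rational, and fix positive integers j₁*, j₂* with ν₁·j₁* ≠ ν₂·j₂*. Assume μ > 0 and m > 0 satisfy: μ² is rational, m² is rational, and m/μ is irrational. Then the set of pairs (j₁, j₂) ∈ ℤ² satisfying the resonance equation is exactly {(j₁*, 0), (−j₁*, 0), (0, j₂*), (0, −j₂*)}. -/

import Mathlib

/-- Key strict inequality: the coefficient equation from matching the irrational part
has no solutions with `x, y > 0`. -/
lemma resonance_key_ineq (p q a b x y : ℝ) (hp : 0 < p) (hq : 0 < q) (ha : 0 < a)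
    (hb : 0 < b) (hx : 0 < x) (hy : 0 < y) :
    ((p*x + q*y)^2 - p^2*a^2*x - q^2*b^2*y) * (a^2*b^2 - b^2*x - a^2*y)
      < 2*x*y*(p^2*a^4 + q^2*b^4) := by
  have hC2 : 0 < y*(a^2*(b^2-y)^2 + b^2*x*(b^2+y)) := by
    have h1 : 0 < b^2 + y := by positivity
    have h2 : 0 < b^2*x*(b^2+y) := by positivity
    have h3 : 0 ≤ a^2*(b^2-y)^2 := by positivity
    exact mul_pos hy (add_pos_of_nonneg_of_pos h3 h2)
  have hC0 : 0 < p^2*x*(b^2*(a^2-x)^2 + a^2*y*(a^2+x)) := by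
    have h1 : 0 < a^2 + x := by positivity
    have h2 : 0 < a^2*y*(a^2+x) := by positivity
    have h3 : 0 ≤ b^2*(a^2-x)^2 := by positivity
    exact mul_pos (mul_pos (pow_pos hp 2) hx) (add_pos_of_nonneg_of_pos h3 h2)
  have hI1 : 2*x*y*(p^2*a^4 + q^2*b^4)
      - ((p*x + q*y)^2 - p^2*a^2*x - q^2*b^2*y) * (a^2*b^2 - b^2*x - a^2*y)
      = p^2*x*(b^2*(a^2-x)^2 + a^2*y*(a^2+x))
        - 2*p*q*x*y*(a^2*b^2 - b^2*x - a^2*y)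
        + q^2*(y*(a^2*(b^2-y)^2 + b^2*x*(b^2+y))) := by ring
  rcases le_or_gt (a^2*b^2 - b^2*x - a^2*y) 0 with hB | hB
  · have h4 : 0 ≤ 2*p*q*x*y*(-(a^2*b^2 - b^2*x - a^2*y)) := by
      have : (0:ℝ) ≤ 2*p*q*x*y := by positivity
      exact mul_nonneg this (neg_nonneg.mpr hB)
    nlinarith [mul_nonneg (sq_nonneg q) hC2.le]
  · -- discriminant case
    have hdisc : 0 < (y*(a^2*(b^2-y)^2 + b^2*x*(b^2+y))) * (p^2*x*(b^2*(a^2-x)^2 + a^2*y*(a^2+x)))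
        - p^2*x^2*y^2*(a^2*b^2 - b^2*x - a^2*y)^2 := by
      have hId : (y*(a^2*(b^2-y)^2 + b^2*x*(b^2+y))) * (p^2*x*(b^2*(a^2-x)^2 + a^2*y*(a^2+x)))
          - p^2*x^2*y^2*(a^2*b^2 - b^2*x - a^2*y)^2
          = p^2*x*y*((a^2*b^2 - b^2*x - a^2*y)^3 + 2*b^6*x*(a^2-x)^2 + 2*a^6*y*(b^2-y)^2
            + 2*a^2*b^2*x*y*(b^2*x + a^2*y)) := by ring
      rw [hId]
      have h1 : 0 < (a^2*b^2 - b^2*x - a^2*y)^3 := by positivity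
      have h2 : 0 ≤ 2*b^6*x*(a^2-x)^2 := by positivity
      have h3 : 0 ≤ 2*a^6*y*(b^2-y)^2 := by positivity
      have h4 : 0 < 2*a^2*b^2*x*y*(b^2*x + a^2*y) := by positivity
      positivity
    nlinarith [sq_nonneg (2*(y*(a^2*(b^2-y)^2 + b^2*x*(b^2+y)))*q
        - 2*p*x*y*(a^2*b^2 - b^2*x - a^2*y)), hC2, hdisc, hI1]

/-- The cross case `k₁ k₂ ≠ 0` of the resonance analysis is impossible. -/
lemma resonance_cross (p q a b x y μ m : ℝ) (P1 P2 P12 Mu Mm Qa Qb Qx Qy : ℚ)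
    (hp : 0 < p) (hq : 0 < q) (ha : 0 < a) (hb : 0 < b) (hx : 0 < x) (hy : 0 < y)
    (hP1 : (P1:ℝ) = p^2) (hP2 : (P2:ℝ) = q^2) (hP12 : (P12:ℝ) = p*q)
    (hMu : (Mu:ℝ) = μ^2) (hMm : (Mm:ℝ) = m^2)
    (hQa : (Qa:ℝ) = a) (hQb : (Qb:ℝ) = b) (hQx : (Qx:ℝ) = x) (hQy : (Qy:ℝ) = y)
    (hirr : Irrational (μ * m))
    (hMain : 4*x*y*(a^2*b^2)*((μ*p^2*a^4 + m)*(μ*q^2*b^4 + m)) =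
      (a^2*b^2*(μ*(p*x + q*y)^2 + m) - (μ*p^2*a^4 + m)*(b^2*x) - (μ*q^2*b^4 + m)*(a^2*y))^2) :
    False := by
  have hC : (2*(Qa^2*Qb^2*(P1*Qx^2 + 2*P12*Qx*Qy + P2*Qy^2) - P1*Qa^4*Qb^2*Qx - P2*Qa^2*Qb^4*Qy)
      *(Qa^2*Qb^2 - Qb^2*Qx - Qa^2*Qy) - 4*Qx*Qy*Qa^2*Qb^2*(P1*Qa^4 + P2*Qb^4) : ℚ) = 0 := by
    by_contra hne
    apply hirr
    refine ⟨(4*Qx*Qy*Qa^2*Qb^2*(P1*P2*Qa^4*Qb^4*Mu + Mm)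
        - (Qa^2*Qb^2*(P1*Qx^2 + 2*P12*Qx*Qy + P2*Qy^2) - P1*Qa^4*Qb^2*Qx - P2*Qa^2*Qb^4*Qy)^2*Mu
        - (Qa^2*Qb^2 - Qb^2*Qx - Qa^2*Qy)^2*Mm)
      / (2*(Qa^2*Qb^2*(P1*Qx^2 + 2*P12*Qx*Qy + P2*Qy^2) - P1*Qa^4*Qb^2*Qx - P2*Qa^2*Qb^4*Qy)
        *(Qa^2*Qb^2 - Qb^2*Qx - Qa^2*Qy) - 4*Qx*Qy*Qa^2*Qb^2*(P1*Qa^4 + P2*Qb^4)), ?_⟩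
    have hne' : ((2*(Qa^2*Qb^2*(P1*Qx^2 + 2*P12*Qx*Qy + P2*Qy^2) - P1*Qa^4*Qb^2*Qx - P2*Qa^2*Qb^4*Qy)
      *(Qa^2*Qb^2 - Qb^2*Qx - Qa^2*Qy) - 4*Qx*Qy*Qa^2*Qb^2*(P1*Qa^4 + P2*Qb^4) : ℚ) : ℝ) ≠ 0 := by
      exact_mod_cast hne
    rw [Rat.cast_div, div_eq_iff hne']
    push_cast
    rw [hP1, hP2, hP12, hMu, hMm, hQa, hQb, hQx, hQy]
    linear_combination hMain
  have hc0 : 2*(a^2*b^2*(p^2*x^2 + 2*(p*q)*x*y + q^2*y^2) - p^2*a^4*b^2*x - q^2*a^2*b^4*y)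
      *(a^2*b^2 - b^2*x - a^2*y) - 4*x*y*a^2*b^2*(p^2*a^4 + q^2*b^4) = 0 := by
    have h0 : ((2*(Qa^2*Qb^2*(P1*Qx^2 + 2*P12*Qx*Qy + P2*Qy^2) - P1*Qa^4*Qb^2*Qx - P2*Qa^2*Qb^4*Qy)
      *(Qa^2*Qb^2 - Qb^2*Qx - Qa^2*Qy) - 4*Qx*Qy*Qa^2*Qb^2*(P1*Qa^4 + P2*Qb^4) : ℚ) : ℝ) = 0 := by
      exact_mod_cast hC
    push_cast at h0
    rw [hP1, hP2, hP12, hQa, hQb, hQx, hQy] at h0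
    linear_combination h0
  have hkey := resonance_key_ineq p q a b x y hp hq ha hb hx hy
  have hr0 : (2*(a^2*b^2)) * (((p*x + q*y)^2 - p^2*a^2*x - q^2*b^2*y) * (a^2*b^2 - b^2*x - a^2*y))
      = (2*(a^2*b^2)) * (2*x*y*(p^2*a^4 + q^2*b^4)) := by linear_combination hc0
  have hreal := mul_left_cancel₀ (by positivity : (2*(a^2*b^2):ℝ) ≠ 0) hr0
  exact absurd hreal (ne_of_lt hkey)

/-- Lemma 2.6 of the paper: for parameters `(μ, m)` in the set `S̃'`, the only integer
solutions of the resonance equation are `(±j₁*, 0)` and `(0, ±j₂*)`. -/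
theorem resonance_solutions_S_tilde'
    (ν₁ ν₂ μ m : ℝ) (hν₁ : 0 < ν₁) (hν₂ : 0 < ν₂)
    (hν₁Q : ∃ q : ℚ, (q : ℝ) = ν₁ ^ 4)
    (hν₂Q : ∃ q : ℚ, (q : ℝ) = ν₂ ^ 4)
    (hratio : ∃ q : ℚ, (q : ℝ) = ν₂ ^ 2 / ν₁ ^ 2)
    (j₁ j₂ : ℕ) (hj₁ : 0 < j₁) (hj₂ : 0 < j₂)
    (hneq : ν₁ * (j₁ : ℝ) ≠ ν₂ * (j₂ : ℝ))
    (hμ : 0 < μ) (hm : 0 < m)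
    (hμ2 : ∃ q : ℚ, (q : ℝ) = μ ^ 2)
    (hm2 : ∃ q : ℚ, (q : ℝ) = m ^ 2)
    (hirr : Irrational (m / μ)) :
    {j : ℤ × ℤ |
        -(Real.sqrt ((μ * ν₁ ^ 4 * (j₁ : ℝ) ^ 4 + m) / (j₁ : ℝ) ^ 2) * (j.1 : ℝ) +
              Real.sqrt ((μ * ν₂ ^ 4 * (j₂ : ℝ) ^ 4 + m) / (j₂ : ℝ) ^ 2) * (j.2 : ℝ)) ^ 2 +
            μ * (ν₁ ^ 2 * (j.1 : ℝ) ^ 2 + ν₂ ^ 2 * (j.2 : ℝ) ^ 2) ^ 2 + m = 0} =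
      {((j₁ : ℤ), 0), (-(j₁ : ℤ), 0), (0, (j₂ : ℤ)), (0, -(j₂ : ℤ))} := by
  obtain ⟨P1, hP1⟩ := hν₁Q
  obtain ⟨P2, hP2⟩ := hν₂Q
  obtain ⟨Pr, hPr⟩ := hratio
  obtain ⟨Mu, hMu⟩ := hμ2
  obtain ⟨Mm, hMm⟩ := hm2
  have ha : (0:ℝ) < (j₁:ℝ) := by exact_mod_cast hj₁
  have hb : (0:ℝ) < (j₂:ℝ) := by exact_mod_cast hj₂
  have hω1 : (Real.sqrt ((μ * ν₁ ^ 4 * (j₁ : ℝ) ^ 4 + m) / (j₁ : ℝ) ^ 2))^2 * (j₁:ℝ)^2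
      = μ * ν₁ ^ 4 * (j₁ : ℝ) ^ 4 + m := by
    rw [Real.sq_sqrt (by positivity)]
    field_simp
  have hω2 : (Real.sqrt ((μ * ν₂ ^ 4 * (j₂ : ℝ) ^ 4 + m) / (j₂ : ℝ) ^ 2))^2 * (j₂:ℝ)^2
      = μ * ν₂ ^ 4 * (j₂ : ℝ) ^ 4 + m := by
    rw [Real.sq_sqrt (by positivity)]
    field_simp
  have hMune : (Mu:ℚ) ≠ 0 := by
    have : (Mu:ℝ) > 0 := by rw [hMu]; positivity
    exact_mod_cast this.ne'
  have hirrmm : Irrational (μ * m) := by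
    have h1 : Irrational ((Mu:ℚ) * (m/μ)) := hirr.ratCast_mul hMune
    have h2 : ((Mu:ℚ):ℝ) * (m/μ) = μ * m := by
      rw [hMu]; field_simp
    rwa [h2] at h1
  ext ⟨k₁, k₂⟩
  simp only [Set.mem_setOf_eq, Set.mem_insert_iff, Set.mem_singleton_iff, Prod.mk.injEq]
  constructor
  · intro h
    by_cases hk₁0 : k₁ = 0
    · subst hk₁0
      push_cast at h
      have hfac : (((k₂:ℤ):ℝ)^2 - (j₂:ℝ)^2) * (μ*ν₂^4*(j₂:ℝ)^2*((k₂:ℤ):ℝ)^2 - m) = 0 := by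
        linear_combination ((j₂:ℝ)^2) * h + (((k₂:ℤ):ℝ)^2) * hω2
      rcases mul_eq_zero.mp hfac with hc | hc
      · have hz : k₂^2 = ((j₂:ℕ):ℤ)^2 := by
          have : ((k₂:ℤ):ℝ)^2 = ((j₂:ℕ):ℝ)^2 := by linarith
          exact_mod_cast this
        have hz2 : (k₂ - (j₂:ℤ)) * (k₂ + (j₂:ℤ)) = 0 := by linear_combination hz
        rcases mul_eq_zero.mp hz2 with h' | h'
        · exact Or.inr (Or.inr (Or.inl ⟨rfl, by omega⟩))
        · exact Or.inr (Or.inr (Or.inr ⟨rfl, by omega⟩))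
      · exfalso
        apply hirr
        refine ⟨P2*(j₂:ℚ)^2*(k₂:ℚ)^2, ?_⟩
        push_cast
        rw [hP2, eq_div_iff hμ.ne']
        linear_combination hc
    · by_cases hk₂0 : k₂ = 0
      · subst hk₂0
        push_cast at h
        have hfac : (((k₁:ℤ):ℝ)^2 - (j₁:ℝ)^2) * (μ*ν₁^4*(j₁:ℝ)^2*((k₁:ℤ):ℝ)^2 - m) = 0 := by
          linear_combination ((j₁:ℝ)^2) * h + (((k₁:ℤ):ℝ)^2) * hω1
        rcases mul_eq_zero.mp hfac with hc | hc
        · have hz : k₁^2 = ((j₁:ℕ):ℤ)^2 := by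
            have : ((k₁:ℤ):ℝ)^2 = ((j₁:ℕ):ℝ)^2 := by linarith
            exact_mod_cast this
          have hz2 : (k₁ - (j₁:ℤ)) * (k₁ + (j₁:ℤ)) = 0 := by linear_combination hz
          rcases mul_eq_zero.mp hz2 with h' | h'
          · exact Or.inl ⟨by omega, rfl⟩
          · exact Or.inr (Or.inl ⟨by omega, rfl⟩)
        · exfalso
          apply hirr
          refine ⟨P1*(j₁:ℚ)^2*(k₁:ℚ)^2, ?_⟩
          push_cast
          rw [hP1, eq_div_iff hμ.ne']
          linear_combination hc
      · exfalso
        have hK1 : (0:ℝ) < ((k₁:ℤ):ℝ)^2 := by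
          have : ((k₁:ℤ):ℝ) ≠ 0 := Int.cast_ne_zero.mpr hk₁0
          positivity
        have hK2 : (0:ℝ) < ((k₂:ℤ):ℝ)^2 := by
          have : ((k₂:ℤ):ℝ) ≠ 0 := Int.cast_ne_zero.mpr hk₂0
          positivity
        set ω₁ := Real.sqrt ((μ * ν₁ ^ 4 * (j₁ : ℝ) ^ 4 + m) / (j₁ : ℝ) ^ 2) with hw1
        set ω₂ := Real.sqrt ((μ * ν₂ ^ 4 * (j₂ : ℝ) ^ 4 + m) / (j₂ : ℝ) ^ 2) with hw2
        have hcross : 2*(((k₁:ℤ):ℝ)*((k₂:ℤ):ℝ))*(ω₁*ω₂)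
            = μ*(ν₁^2*((k₁:ℤ):ℝ)^2 + ν₂^2*((k₂:ℤ):ℝ)^2)^2 + m
              - ω₁^2*((k₁:ℤ):ℝ)^2 - ω₂^2*((k₂:ℤ):ℝ)^2 := by
          linear_combination -h
        have hsq : (2*(((k₁:ℤ):ℝ)*((k₂:ℤ):ℝ))*(ω₁*ω₂))^2
            = (μ*(ν₁^2*((k₁:ℤ):ℝ)^2 + ν₂^2*((k₂:ℤ):ℝ)^2)^2 + m
              - ω₁^2*((k₁:ℤ):ℝ)^2 - ω₂^2*((k₂:ℤ):ℝ)^2)^2 := by rw [hcross]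
        have hsq2 : 4*(((k₁:ℤ):ℝ)^2)*(((k₂:ℤ):ℝ)^2)*((j₁:ℝ)^2*(j₂:ℝ)^2)
              *((ω₁^2*(j₁:ℝ)^2)*(ω₂^2*(j₂:ℝ)^2))
            = ((j₁:ℝ)^2*(j₂:ℝ)^2*(μ*(ν₁^2*((k₁:ℤ):ℝ)^2 + ν₂^2*((k₂:ℤ):ℝ)^2)^2 + m)
              - (ω₁^2*(j₁:ℝ)^2)*((j₂:ℝ)^2*((k₁:ℤ):ℝ)^2)
              - (ω₂^2*(j₂:ℝ)^2)*((j₁:ℝ)^2*((k₂:ℤ):ℝ)^2))^2 := by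
          linear_combination ((j₁:ℝ)^4*(j₂:ℝ)^4) * hsq
        rw [hω1, hω2] at hsq2
        refine resonance_cross (ν₁^2) (ν₂^2) ((j₁:ℕ):ℝ) ((j₂:ℕ):ℝ) (((k₁:ℤ):ℝ)^2)
          (((k₂:ℤ):ℝ)^2) μ m P1 P2 (P1*Pr) Mu Mm (j₁:ℚ) (j₂:ℚ) ((k₁:ℚ)^2) ((k₂:ℚ)^2)
          (by positivity) (by positivity) ha hb hK1 hK2
          (by rw [hP1]; ring) (by rw [hP2]; ring) ?_
          hMu hMm (by push_cast; ring) (by push_cast; ring) (by push_cast; ring)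
          (by push_cast; ring) hirrmm ?_
        · -- (P1*Pr : ℝ) = ν₁^2 * ν₂^2
          push_cast
          rw [hP1, hPr]
          field_simp
        · linear_combination hsq2
  · rintro (⟨h1, h2⟩ | ⟨h1, h2⟩ | ⟨h1, h2⟩ | ⟨h1, h2⟩) <;> subst h1 <;> subst h2 <;>
      push_cast <;> [skip; skip; skip; skip] <;> first
        | linear_combination -hω1
        | linear_combination -hω2
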